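/- (Jordan's lemma.) Let E be a finite-dimensional complex inner product space and let p and q be two orthogonal projections on E (self-adjoint idempotent linear maps). Then there exists a finite family of nonzero subspaces S_1, …, S_k of E that are pairwise orthogonal, whose direct sum is all of E, such that each S_j has dimension at most 2, each S_j is invariant under both p and q (p(S_j) ⊆ S_j and q(S_j) ⊆ S_j), and on each two-dimensional S_j the restrictions of p and q each have rank one. -/

import Mathlib

open Module

section Aux

universe u

variable {E : Type u} [NormedAddCommGroup E] [InnerProductSpace ℂ E]

private lemma span_pair_eq_span_singleton (v : E) (c : ℂ) :
    Submodule.span ℂ {v, c • v} = Submodule.span ℂ {v} := by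
  apply le_antisymm
  · rw [Submodule.span_le]
    rintro x hx
    rcases hx with rfl | rfl
    · exact Submodule.mem_span_singleton_self _
    · exact Submodule.smul_mem _ _ (Submodule.mem_span_singleton_self _)
  · exact Submodule.span_mono (Set.singleton_subset_iff.mpr (Set.mem_insert _ _))

private lemma finrank_span_pair_le (v w : E) :
    finrank ℂ (Submodule.span ℂ {v, w}) ≤ 2 := by
  classical
  have h := finrank_span_le_card (R := ℂ) ({v, w} : Set E)
  refine h.trans ?_
  have : ({v, w} : Set E).toFinset ⊆ {v, w} := by
    intro x hx
    simpa using (Set.mem_toFinset.mp hx)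
  calc ({v, w} : Set E).toFinset.card ≤ ({v, w} : Finset E).card := Finset.card_le_card this
    _ ≤ 2 := Finset.card_insert_le _ _ |>.trans (by simp)

/-- The key step: a nonzero invariant subspace of dimension at most two. -/
private lemma exists_good_subspace [FiniteDimensional ℂ E] [Nontrivial E]
    (p q : E →ₗ[ℂ] E)
    (hp1 : ∀ x, p (p x) = p x) (hq1 : ∀ x, q (q x) = q x) :
    ∃ S : Submodule ℂ E, S ≠ ⊥ ∧ finrank ℂ S ≤ 2 ∧
      (∀ v ∈ S, p v ∈ S ∧ q v ∈ S) ∧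
      (finrank ℂ S = 2 → finrank ℂ (S.map p) = 1 ∧ finrank ℂ (S.map q) = 1) := by
  classical
  set A : E →ₗ[ℂ] E := (p - q) ∘ₗ (p - q) with hAdef
  have hA : ∀ x, A x = p x + q x - p (q x) - q (p x) := by
    intro x
    simp only [hAdef, LinearMap.comp_apply, LinearMap.sub_apply, map_sub, hp1, hq1]
    abel
  have hcomm : ∀ x, A (p x) = p (A x) := by
    intro x
    simp only [hA, map_add, map_sub, hp1, hq1]
    abel
  obtain ⟨μ, hμ⟩ := Module.End.exists_eigenvalue (A : Module.End ℂ E)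
  obtain ⟨w, hw⟩ := hμ.exists_hasEigenvector
  have hw0 : w ≠ 0 := hw.right
  have hAw : A w = μ • w := hw.apply_eq_smul
  by_cases hc : p w = 0
  · -- case p v = 0, with v := w
    set v := w with hvdef
    have hpv : p v = 0 := hc
    have hkey : p (q v) = q v - μ • v := by
      have h := hAw
      rw [hA v, hpv, map_zero] at h
      -- h : 0 + q v - p (q v) - 0 = μ • v
      rw [eq_sub_iff_add_eq, ← h]
      abel
    refine ⟨Submodule.span ℂ {v, q v}, ?_, finrank_span_pair_le v (q v), ?_, ?_⟩
    · intro hbot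
      apply hw0
      have hvS : v ∈ Submodule.span ℂ {v, q v} := Submodule.subset_span (by simp)
      rw [hbot, Submodule.mem_bot] at hvS
      exact hvS
    · have hvS : v ∈ Submodule.span ℂ {v, q v} := Submodule.subset_span (by simp)
      have hqvS : q v ∈ Submodule.span ℂ {v, q v} := Submodule.subset_span (by simp)
      have hmp : (Submodule.span ℂ {v, q v}).map p ≤ Submodule.span ℂ {v, q v} := by
        rw [Submodule.map_span, Submodule.span_le]
        rintro _ ⟨x, (rfl | rfl), rfl⟩
        · rw [hpv]; exact Submodule.zero_mem _
        · rw [hkey]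
          exact Submodule.sub_mem _ hqvS (Submodule.smul_mem _ _ hvS)
      have hmq : (Submodule.span ℂ {v, q v}).map q ≤ Submodule.span ℂ {v, q v} := by
        rw [Submodule.map_span, Submodule.span_le]
        rintro _ ⟨x, (rfl | rfl), rfl⟩
        · exact hqvS
        · rw [hq1]; exact hqvS
      exact fun x hx => ⟨hmp (Submodule.mem_map_of_mem hx), hmq (Submodule.mem_map_of_mem hx)⟩
    · intro h2
      have hqv0 : q v ≠ 0 := by
        intro hz
        rw [hz] at h2
        have : ({v, (0:E)} : Set E) = {(0:E), v} := by
          rw [Set.pair_comm]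
        rw [this] at h2
        rw [Submodule.span_insert, Submodule.span_zero_singleton, bot_sup_eq,
          finrank_span_singleton hw0] at h2
        omega
      have hne : q v - μ • v ≠ 0 := by
        intro hz
        have hqv : q v = μ • v := by
          have := sub_eq_zero.mp hz; exact this
        rw [hqv, span_pair_eq_span_singleton, finrank_span_singleton hw0] at h2
        omega
      constructor
      · rw [Submodule.map_span, Set.image_pair, hpv, hkey, Submodule.span_insert,
          Submodule.span_zero_singleton, bot_sup_eq, finrank_span_singleton hne]
      · rw [Submodule.map_span, Set.image_pair, hq1]
        have : ({q v, q v} : Set E) = {q v} := by simp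
        rw [this, finrank_span_singleton hqv0]
  · -- case p v = v, with v := p w
    set v := p w with hvdef
    have hv0 : v ≠ 0 := hc
    have hpv : p v = v := hp1 w
    have hAv : A v = μ • v := by
      rw [hvdef, hcomm, hAw, map_smul]
    have hkey : p (q v) = v - μ • v := by
      have h := hAv
      rw [hA v, hpv] at h
      -- h : v + q v - p (q v) - q v = μ • v
      rw [eq_sub_iff_add_eq, ← h]
      abel
    refine ⟨Submodule.span ℂ {v, q v}, ?_, finrank_span_pair_le v (q v), ?_, ?_⟩
    · intro hbot
      apply hv0
      have hvS : v ∈ Submodule.span ℂ {v, q v} := Submodule.subset_span (by simp)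
      rw [hbot, Submodule.mem_bot] at hvS
      exact hvS
    · have hvS : v ∈ Submodule.span ℂ {v, q v} := Submodule.subset_span (by simp)
      have hqvS : q v ∈ Submodule.span ℂ {v, q v} := Submodule.subset_span (by simp)
      have hmp : (Submodule.span ℂ {v, q v}).map p ≤ Submodule.span ℂ {v, q v} := by
        rw [Submodule.map_span, Submodule.span_le]
        rintro _ ⟨x, (rfl | rfl), rfl⟩
        · rw [hpv]; exact hvS
        · rw [hkey]
          exact Submodule.sub_mem _ hvS (Submodule.smul_mem _ _ hvS)
      have hmq : (Submodule.span ℂ {v, q v}).map q ≤ Submodule.span ℂ {v, q v} := by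
        rw [Submodule.map_span, Submodule.span_le]
        rintro _ ⟨x, (rfl | rfl), rfl⟩
        · exact hqvS
        · rw [hq1]; exact hqvS
      exact fun x hx => ⟨hmp (Submodule.mem_map_of_mem hx), hmq (Submodule.mem_map_of_mem hx)⟩
    · intro h2
      have hqv0 : q v ≠ 0 := by
        intro hz
        rw [hz] at h2
        have : ({v, (0:E)} : Set E) = {(0:E), v} := by rw [Set.pair_comm]
        rw [this, Submodule.span_insert, Submodule.span_zero_singleton, bot_sup_eq,
          finrank_span_singleton hv0] at h2
        omega
      constructor
      · rw [Submodule.map_span, Set.image_pair, hpv, hkey]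
        have : v - μ • v = (1 - μ) • v := by
          rw [sub_smul, one_smul]
        rw [this, span_pair_eq_span_singleton, finrank_span_singleton hv0]
      · rw [Submodule.map_span, Set.image_pair, hq1]
        have : ({q v, q v} : Set E) = {q v} := by simp
        rw [this, finrank_span_singleton hqv0]

end Aux

private lemma jordan_aux : ∀ (n : ℕ) (E : Type u) [NormedAddCommGroup E]
    [InnerProductSpace ℂ E] [FiniteDimensional ℂ E], finrank ℂ E ≤ n →
    ∀ (p q : E →ₗ[ℂ] E), (∀ x, p (p x) = p x) → LinearMap.IsSymmetric p →
    (∀ x, q (q x) = q x) → LinearMap.IsSymmetric q →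
    ∃ (k : ℕ) (S : Fin k → Submodule ℂ E),
      (∀ j, S j ≠ ⊥) ∧
      (∀ i j, i ≠ j → ∀ u ∈ S i, ∀ v ∈ S j, (inner ℂ u v : ℂ) = 0) ∧
      (⨆ j, S j) = ⊤ ∧
      (∀ j, Module.finrank ℂ (S j) ≤ 2) ∧
      (∀ j, ∀ v ∈ S j, p v ∈ S j ∧ q v ∈ S j) ∧
      (∀ j, Module.finrank ℂ (S j) = 2 →
        Module.finrank ℂ (Submodule.map p (S j)) = 1 ∧
        Module.finrank ℂ (Submodule.map q (S j)) = 1) := by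
  intro n
  induction n with
  | zero =>
    intro E _ _ _ hE p q _ _ _ _
    have h0 : finrank ℂ E = 0 := Nat.le_zero.mp hE
    have : Subsingleton E := finrank_zero_iff.mp h0
    refine ⟨0, Fin.elim0, fun j => j.elim0, fun i => i.elim0, ?_, fun j => j.elim0,
      fun j => j.elim0, fun j => j.elim0⟩
    exact Subsingleton.elim _ _
  | succ n ih =>
    intro E _ _ _ hE p q hp1 hp2 hq1 hq2
    by_cases h0 : finrank ℂ E = 0
    · have : Subsingleton E := finrank_zero_iff.mp h0
      refine ⟨0, Fin.elim0, fun j => j.elim0, fun i => i.elim0, ?_, fun j => j.elim0,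
        fun j => j.elim0, fun j => j.elim0⟩
      exact Subsingleton.elim _ _
    · have : Nontrivial E := by
        rw [← finrank_pos_iff (R := ℂ)]; omega
      obtain ⟨S, hSne, hSdim, hSinv, hSrank⟩ := exists_good_subspace p q hp1 hq1
      set T := Sᗮ with hTdef
      have hpT : ∀ x ∈ T, p x ∈ T := by
        intro x hx
        rw [Submodule.mem_orthogonal] at hx ⊢
        intro u hu
        rw [← hp2 u x]
        exact hx (p u) (hSinv u hu).1
      have hqT : ∀ x ∈ T, q x ∈ T := by
        intro x hx
        rw [Submodule.mem_orthogonal] at hx ⊢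
        intro u hu
        rw [← hq2 u x]
        exact hx (q u) (hSinv u hu).2
      set p' : T →ₗ[ℂ] T := p.restrict hpT with hp'def
      set q' : T →ₗ[ℂ] T := q.restrict hqT with hq'def
      have hp'coe : ∀ x : T, (p' x : E) = p x := fun x => rfl
      have hq'coe : ∀ x : T, (q' x : E) = q x := fun x => rfl
      have hp'1 : ∀ x : T, p' (p' x) = p' x := by
        intro x; apply Subtype.ext; simp only [hp'coe, hp1]
      have hq'1 : ∀ x : T, q' (q' x) = q' x := by
        intro x; apply Subtype.ext; simp only [hq'coe, hq1]
      have hp'2 : LinearMap.IsSymmetric p' := by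
        intro x y
        rw [Submodule.coe_inner, Submodule.coe_inner, hp'coe, hp'coe]
        exact hp2 _ _
      have hq'2 : LinearMap.IsSymmetric q' := by
        intro x y
        rw [Submodule.coe_inner, Submodule.coe_inner, hq'coe, hq'coe]
        exact hq2 _ _
      have hSpos : 0 < finrank ℂ S := by
        exact Nat.pos_of_ne_zero fun h => hSne (Submodule.finrank_eq_zero.mp h)
      have hsum : finrank ℂ S + finrank ℂ T = finrank ℂ E :=
        S.finrank_add_finrank_orthogonal
      have hTle : finrank ℂ T ≤ n := by omega
      obtain ⟨k, S', hne', horth', hsup', hdim', hinv', hrank'⟩ :=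
        ih T hTle p' q' hp'1 hp'2 hq'1 hq'2
      -- lift
      set F : Fin (k + 1) → Submodule ℂ E :=
        Fin.cons S (fun j => (S' j).map T.subtype) with hFdef
      have hF0 : F 0 = S := rfl
      have hFs : ∀ j : Fin k, F j.succ = (S' j).map T.subtype := fun j => rfl
      have hcommp : ∀ j : Fin k, Submodule.map p ((S' j).map T.subtype) =
          (Submodule.map p' (S' j)).map T.subtype := by
        intro j
        rw [← Submodule.map_comp, ← Submodule.map_comp]
        congr 1
      have hcommq : ∀ j : Fin k, Submodule.map q ((S' j).map T.subtype) =
          (Submodule.map q' (S' j)).map T.subtype := by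
        intro j
        rw [← Submodule.map_comp, ← Submodule.map_comp]
        congr 1
      refine ⟨k + 1, F, ?_, ?_, ?_, ?_, ?_, ?_⟩
      · -- nonzero
        intro j
        induction j using Fin.cases with
        | zero => exact hSne
        | succ j =>
          rw [hFs]
          intro hbot
          obtain ⟨x, hx, hx0⟩ := Submodule.exists_mem_ne_zero_of_ne_bot (hne' j)
          have : (x : E) ∈ (S' j).map T.subtype := Submodule.mem_map_of_mem hx
          rw [hbot, Submodule.mem_bot] at this
          exact hx0 (Subtype.ext this)
      · -- pairwise orthogonal
        have horthST : ∀ (j : Fin k), ∀ u ∈ S, ∀ v ∈ (S' j).map T.subtype,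
            (inner ℂ u v : ℂ) = 0 := by
          rintro j u hu v hv
          have hvT : v ∈ T := by
            rcases hv with ⟨y, _, rfl⟩
            exact y.2
          exact (Submodule.mem_orthogonal S v).mp hvT u hu
        intro i j hij
        induction i using Fin.cases with
        | zero =>
          induction j using Fin.cases with
          | zero => exact absurd rfl hij
          | succ j =>
            rw [hF0, hFs]
            exact horthST j
        | succ i =>
          induction j using Fin.cases with
          | zero =>
            rw [hF0, hFs]
            intro u hu v hv
            rw [← inner_conj_symm]
            rw [horthST i v hv u hu]
            simp
          | succ j =>
            rw [hFs, hFs]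
            rintro _ ⟨x, hx, rfl⟩ _ ⟨y, hy, rfl⟩
            have hij' : i ≠ j := by
              intro h; exact hij (by rw [h])
            exact horth' i j hij' x hx y hy
      · -- sup = top
        have htop : S ⊔ T = ⊤ := Submodule.sup_orthogonal_of_hasOrthogonalProjection
        rw [eq_top_iff, ← htop]
        apply sup_le
        · exact le_trans (le_of_eq hF0.symm) (le_iSup F 0)
        · have : T = ⨆ j, (S' j).map T.subtype := by
            rw [← Submodule.map_iSup, hsup', Submodule.map_subtype_top]
          rw [this]
          apply iSup_le
          intro j
          exact le_trans (le_of_eq (hFs j).symm) (le_iSup F j.succ)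
      · -- finrank ≤ 2
        intro j
        induction j using Fin.cases with
        | zero => exact hSdim
        | succ j =>
          rw [hFs, Submodule.finrank_map_subtype_eq]
          exact hdim' j
      · -- invariance
        intro j
        induction j using Fin.cases with
        | zero => exact hSinv
        | succ j =>
          rw [hFs]
          rintro _ ⟨x, hx, rfl⟩
          constructor
          · exact Submodule.mem_map_of_mem ((hinv' j x hx).1)
          · exact Submodule.mem_map_of_mem ((hinv' j x hx).2)
      · -- rank one
        intro j
        induction j using Fin.cases with
        | zero => exact hSrank
        | succ j =>
          rw [hFs, Submodule.finrank_map_subtype_eq]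
          intro h2
          obtain ⟨h1, h2'⟩ := hrank' j h2
          constructor
          · rw [hcommp, Submodule.finrank_map_subtype_eq]
            exact h1
          · rw [hcommq, Submodule.finrank_map_subtype_eq]
            exact h2'

/-- Jordan's lemma: two orthogonal projections on a
finite-dimensional complex inner product space admit a decomposition of the
space into pairwise-orthogonal nonzero invariant subspaces of dimension at
most 2, on each two-dimensional one of which both projections restrict to
rank-one maps. -/
theorem jordan_lemma (E : Type*) [NormedAddCommGroup E] [InnerProductSpace ℂ E]
    [FiniteDimensional ℂ E] (p q : E →ₗ[ℂ] E)
    (hp1 : p ∘ₗ p = p) (hp2 : LinearMap.IsSymmetric p)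
    (hq1 : q ∘ₗ q = q) (hq2 : LinearMap.IsSymmetric q) :
    ∃ (k : ℕ) (S : Fin k → Submodule ℂ E),
      (∀ j, S j ≠ ⊥) ∧
      (∀ i j, i ≠ j → ∀ u ∈ S i, ∀ v ∈ S j, (inner ℂ u v : ℂ) = 0) ∧
      (⨆ j, S j) = ⊤ ∧
      (∀ j, Module.finrank ℂ (S j) ≤ 2) ∧
      (∀ j, ∀ v ∈ S j, p v ∈ S j ∧ q v ∈ S j) ∧
      (∀ j, Module.finrank ℂ (S j) = 2 →
        Module.finrank ℂ (Submodule.map p (S j)) = 1 ∧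
        Module.finrank ℂ (Submodule.map q (S j)) = 1) := by
  exact jordan_aux (finrank ℂ E) E le_rfl p q
    (fun x => DFunLike.congr_fun hp1 x) hp2
    (fun x => DFunLike.congr_fun hq1 x) hq2
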